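/- For t ≥ 0, let A(t) ⊆ ℝ³ be the set of endpoints χ(t) over all Dubins trajectories χ on [0,t] from χ_{2D,i} of class CSC or CCC (with possibly degenerate subintervals). Then A(t) is nonempty and compact for every t ≥ 0, and for every T > 0 the map t ↦ A(t) is continuous on [0,T] with respect to the Hausdorff distance. -/
import Mathlib


open MeasureTheory Metric Set

noncomputable section

/-- Right-hand side of the Dubins car dynamics on state `(x, y, γ)`:
`ẋ = cos γ, ẏ = sin γ, γ̇ = u`. -/
def dubinsRHS (q : ℝ × ℝ × ℝ) (w : ℝ) : ℝ × ℝ × ℝ :=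
  (Real.cos q.2.2, Real.sin q.2.2, w)

/-- A Dubins trajectory on `[a, b]` from `x₀`: an (absolutely continuous, in integral
form) solution of the Dubins car equations for a measurable control with values in
`[-1, 1]`. -/
def IsDubinsTraj (a b : ℝ) (x₀ : ℝ × ℝ × ℝ) (χ : ℝ → ℝ × ℝ × ℝ) (u : ℝ → ℝ) : Prop :=
  Measurable u ∧ (∀ t ∈ Set.Icc a b, u t ∈ Set.Icc (-1 : ℝ) 1) ∧
  ContinuousOn χ (Set.Icc a b) ∧
  ∀ t ∈ Set.Icc a b, χ t = x₀ + ∫ s in a..t, dubinsRHS (χ s) (u s)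

/-- The control on `[a, b]` is of class CSC: bang (`±1`), then straight (`0`), then
bang (`±1`), with possibly degenerate subintervals. -/
def IsCSCControl (a b : ℝ) (u : ℝ → ℝ) : Prop :=
  ∃ t₁ t₂, a ≤ t₁ ∧ t₁ ≤ t₂ ∧ t₂ ≤ b ∧
    ∃ c ∈ ({-1, 1} : Set ℝ), ∃ d ∈ ({-1, 1} : Set ℝ),
      (∀ t ∈ Set.Ioo a t₁, u t = c) ∧ (∀ t ∈ Set.Ioo t₁ t₂, u t = 0) ∧
      (∀ t ∈ Set.Ioo t₂ b, u t = d)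

/-- The control on `[a, b]` is of class CCC: bang `c`, then `-c`, then `c`,
with `c = ±1` and possibly degenerate subintervals. -/
def IsCCCControl (a b : ℝ) (u : ℝ → ℝ) : Prop :=
  ∃ t₁ t₂, a ≤ t₁ ∧ t₁ ≤ t₂ ∧ t₂ ≤ b ∧
    ∃ c ∈ ({-1, 1} : Set ℝ),
      (∀ t ∈ Set.Ioo a t₁, u t = c) ∧ (∀ t ∈ Set.Ioo t₁ t₂, u t = -c) ∧
      (∀ t ∈ Set.Ioo t₂ b, u t = c)

/-- The Dubins reachable set `G(f_{2D}, t, χ_{2D,i})` from the origin. -/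
def DubinsReach (t : ℝ) : Set (ℝ × ℝ × ℝ) :=
  {y | ∃ χ u, IsDubinsTraj 0 t (0, 0, 0) χ u ∧ χ t = y}

/-- The set `A(t)` of endpoints of Dubins trajectories of class CSC or CCC of
length `t` from the origin. -/
def DubinsA (t : ℝ) : Set (ℝ × ℝ × ℝ) :=
  {y | ∃ χ u, IsDubinsTraj 0 t (0, 0, 0) χ u ∧
    (IsCSCControl 0 t u ∨ IsCCCControl 0 t u) ∧ χ t = y}

def ctrl (t₁ t₂ c₁ c₂ c₃ : ℝ) : ℝ → ℝ :=
  fun s => if s < t₁ then c₁ else if s < t₂ then c₂ else c₃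

def ang (t₁ t₂ c₁ c₂ c₃ : ℝ) (s : ℝ) : ℝ :=
  c₁ * min s t₁ + c₂ * (min s t₂ - min s t₁) + c₃ * (s - min s t₂)

def traj (t₁ t₂ c₁ c₂ c₃ : ℝ) (s : ℝ) : ℝ × ℝ × ℝ :=
  (∫ r in (0:ℝ)..s, Real.cos (ang t₁ t₂ c₁ c₂ c₃ r),
   ∫ r in (0:ℝ)..s, Real.sin (ang t₁ t₂ c₁ c₂ c₃ r),
   ang t₁ t₂ c₁ c₂ c₃ s)

lemma ctrl_measurable (t₁ t₂ c₁ c₂ c₃ : ℝ) : Measurable (ctrl t₁ t₂ c₁ c₂ c₃) := by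
  unfold ctrl
  exact Measurable.ite (measurableSet_lt measurable_id measurable_const)
    measurable_const <| Measurable.ite (measurableSet_lt measurable_id measurable_const)
    measurable_const measurable_const

lemma ctrl_abs_le {t₁ t₂ c₁ c₂ c₃ : ℝ} (h1 : |c₁| ≤ 1) (h2 : |c₂| ≤ 1) (h3 : |c₃| ≤ 1)
    (s : ℝ) : |ctrl t₁ t₂ c₁ c₂ c₃ s| ≤ 1 := by
  unfold ctrl; split_ifs <;> assumption

lemma ang_continuous (t₁ t₂ c₁ c₂ c₃ : ℝ) : Continuous (ang t₁ t₂ c₁ c₂ c₃) := by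
  unfold ang; fun_prop

lemma II_of_bounded {u : ℝ → ℝ} (hm : Measurable u) (hb : ∀ x, |u x| ≤ 1) (a b : ℝ) :
    IntervalIntegrable u volume a b :=
  (_root_.intervalIntegrable_const (c := (1:ℝ))).mono_fun' hm.aestronglyMeasurable.restrict
    (ae_of_all _ fun x => by simpa [Real.norm_eq_abs] using hb x)

lemma ae_ne_real (c : ℝ) : ∀ᵐ x : ℝ, x ≠ c := by
  refine ae_iff.mpr ?_
  simpa using measure_singleton (α := ℝ) (μ := volume) c

lemma intervalIntegral_triple {a b : ℝ} {f g h : ℝ → ℝ}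
    (hf : IntervalIntegrable f volume a b) (hg : IntervalIntegrable g volume a b)
    (hh : IntervalIntegrable h volume a b) :
    (∫ x in a..b, ((f x, g x, h x) : ℝ × ℝ × ℝ)) =
      (∫ x in a..b, f x, ∫ x in a..b, g x, ∫ x in a..b, h x) := by
  simp only [intervalIntegral]
  rw [integral_pair hf.1 (hg.1.prodMk hh.1), integral_pair hg.1 hh.1,
    integral_pair hf.2 (hg.2.prodMk hh.2), integral_pair hg.2 hh.2]
  ext <;> simp

/-- Closed form for the integral of the piecewise-constant control. -/

lemma integral_ctrl {t₁ t₂ c₁ c₂ c₃ : ℝ} (h0 : 0 ≤ t₁) (h12 : t₁ ≤ t₂)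
    (hc1 : |c₁| ≤ 1) (hc2 : |c₂| ≤ 1) (hc3 : |c₃| ≤ 1) {s : ℝ} (hs : 0 ≤ s) :
    ∫ r in (0:ℝ)..s, ctrl t₁ t₂ c₁ c₂ c₃ r = ang t₁ t₂ c₁ c₂ c₃ s := by
  have hII : ∀ a b : ℝ, IntervalIntegrable (ctrl t₁ t₂ c₁ c₂ c₃) volume a b :=
    II_of_bounded (ctrl_measurable _ _ _ _ _) (ctrl_abs_le hc1 hc2 hc3)
  set m₁ := min s t₁ with hm₁
  set m₂ := min s t₂ with hm₂
  have hm12 : m₁ ≤ m₂ := min_le_min le_rfl h12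
  have h0m : 0 ≤ m₁ := le_min hs h0
  have hm2s : m₂ ≤ s := min_le_left _ _
  have e1 : ∫ r in (0:ℝ)..m₁, ctrl t₁ t₂ c₁ c₂ c₃ r = c₁ * m₁ := by
    have : ∫ r in (0:ℝ)..m₁, ctrl t₁ t₂ c₁ c₂ c₃ r = ∫ r in (0:ℝ)..m₁, c₁ := by
      apply intervalIntegral.integral_congr_ae
      filter_upwards [ae_ne_real t₁] with r hr hrm
      rw [Set.uIoc_of_le h0m] at hrm
      have hrt : r < t₁ := lt_of_le_of_ne (hrm.2.trans (min_le_right _ _)) hr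
      simp [ctrl, hrt]
    rw [this, intervalIntegral.integral_const, smul_eq_mul]; ring
  have e2 : ∫ r in m₁..m₂, ctrl t₁ t₂ c₁ c₂ c₃ r = c₂ * (m₂ - m₁) := by
    have : ∫ r in m₁..m₂, ctrl t₁ t₂ c₁ c₂ c₃ r = ∫ r in m₁..m₂, c₂ := by
      apply intervalIntegral.integral_congr_ae
      filter_upwards [ae_ne_real t₂] with r hr hrm
      rw [Set.uIoc_of_le hm12] at hrm
      rcases le_or_gt s t₁ with h | h
      · exfalso
        have : m₁ = m₂ := by
          rw [hm₁, hm₂, min_eq_left h, min_eq_left (h.trans h12)]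
        exact absurd (hrm.1.trans_le hrm.2) (by rw [this]; exact lt_irrefl _)
      · have hm₁t : m₁ = t₁ := min_eq_right h.le
        have h1 : ¬ r < t₁ := not_lt.2 (hm₁t ▸ hrm.1.le)
        have h2 : r < t₂ := lt_of_le_of_ne (hrm.2.trans (min_le_right _ _)) hr
        simp [ctrl, h1, h2]
    rw [this, intervalIntegral.integral_const, smul_eq_mul]; ring
  have e3 : ∫ r in m₂..s, ctrl t₁ t₂ c₁ c₂ c₃ r = c₃ * (s - m₂) := by
    have : ∫ r in m₂..s, ctrl t₁ t₂ c₁ c₂ c₃ r = ∫ r in m₂..s, c₃ := by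
      apply intervalIntegral.integral_congr_ae
      filter_upwards with r hrm
      rw [Set.uIoc_of_le hm2s] at hrm
      rcases le_or_gt s t₂ with h | h
      · exact absurd (hrm.1.trans_le hrm.2)
          (by rw [hm₂, min_eq_left h]; exact lt_irrefl _)
      · have hm₂t : m₂ = t₂ := min_eq_right h.le
        have h2 : ¬ r < t₂ := not_lt.2 (hm₂t ▸ hrm.1.le)
        have h1 : ¬ r < t₁ := fun hh => h2 (hh.trans_le h12)
        simp [ctrl, h1, h2]
    rw [this, intervalIntegral.integral_const, smul_eq_mul]; ring
  have split1 := intervalIntegral.integral_add_adjacent_intervals (hII 0 m₁) (hII m₁ m₂)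
  have split2 := intervalIntegral.integral_add_adjacent_intervals (hII 0 m₂) (hII m₂ s)
  rw [← split2, ← split1, e1, e2, e3]
  unfold ang
  ring

lemma ang_in_traj (t₁ t₂ c₁ c₂ c₃ s : ℝ) : (traj t₁ t₂ c₁ c₂ c₃ s).2.2 = ang t₁ t₂ c₁ c₂ c₃ s := rfl

lemma traj_isDubins {t t₁ t₂ c₁ c₂ c₃ : ℝ} (h0 : 0 ≤ t₁) (h12 : t₁ ≤ t₂) (h2t : t₂ ≤ t)
    (hc1 : |c₁| ≤ 1) (hc2 : |c₂| ≤ 1) (hc3 : |c₃| ≤ 1) :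
    IsDubinsTraj 0 t (0, 0, 0) (traj t₁ t₂ c₁ c₂ c₃) (ctrl t₁ t₂ c₁ c₂ c₃) := by
  have hcont : Continuous (ang t₁ t₂ c₁ c₂ c₃) := ang_continuous _ _ _ _ _
  have hcos : Continuous fun r => Real.cos (ang t₁ t₂ c₁ c₂ c₃ r) := Real.continuous_cos.comp hcont
  have hsin : Continuous fun r => Real.sin (ang t₁ t₂ c₁ c₂ c₃ r) := Real.continuous_sin.comp hcont
  have hIIc : ∀ a b : ℝ, IntervalIntegrable (fun r => Real.cos (ang t₁ t₂ c₁ c₂ c₃ r)) volume a b :=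
    fun a b => hcos.intervalIntegrable a b
  have hIIs : ∀ a b : ℝ, IntervalIntegrable (fun r => Real.sin (ang t₁ t₂ c₁ c₂ c₃ r)) volume a b :=
    fun a b => hsin.intervalIntegrable a b
  have hIIu : ∀ a b : ℝ, IntervalIntegrable (ctrl t₁ t₂ c₁ c₂ c₃) volume a b :=
    II_of_bounded (ctrl_measurable _ _ _ _ _) (ctrl_abs_le hc1 hc2 hc3)
  refine ⟨ctrl_measurable _ _ _ _ _, fun r _ => abs_le.mp (ctrl_abs_le hc1 hc2 hc3 r), ?_, ?_⟩
  · apply Continuous.continuousOn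
    exact (intervalIntegral.continuous_primitive hIIc 0).prodMk
      ((intervalIntegral.continuous_primitive hIIs 0).prodMk hcont)
  · intro s hs
    have : ∫ r in (0:ℝ)..s, dubinsRHS (traj t₁ t₂ c₁ c₂ c₃ r) (ctrl t₁ t₂ c₁ c₂ c₃ r)
        = (∫ r in (0:ℝ)..s, Real.cos (ang t₁ t₂ c₁ c₂ c₃ r),
           ∫ r in (0:ℝ)..s, Real.sin (ang t₁ t₂ c₁ c₂ c₃ r),
           ∫ r in (0:ℝ)..s, ctrl t₁ t₂ c₁ c₂ c₃ r) := by
      exact intervalIntegral_triple (hIIc 0 s) (hIIs 0 s) (hIIu 0 s)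
    rw [this, integral_ctrl h0 h12 hc1 hc2 hc3 hs.1]
    unfold traj
    ext <;> simp

/-- Uniqueness of the endpoint for a Dubins trajectory with piecewise-constant control. -/

lemma endpoint_eq {t t₁ t₂ c₁ c₂ c₃ : ℝ} (h0 : 0 ≤ t₁) (h12 : t₁ ≤ t₂) (h2t : t₂ ≤ t)
    (hc1 : |c₁| ≤ 1) (hc2 : |c₂| ≤ 1) (hc3 : |c₃| ≤ 1)
    {χ : ℝ → ℝ × ℝ × ℝ} {u : ℝ → ℝ}
    (hD : IsDubinsTraj 0 t (0, 0, 0) χ u)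
    (hu1 : ∀ r ∈ Set.Ioo 0 t₁, u r = c₁) (hu2 : ∀ r ∈ Set.Ioo t₁ t₂, u r = c₂)
    (hu3 : ∀ r ∈ Set.Ioo t₂ t, u r = c₃) :
    χ t = traj t₁ t₂ c₁ c₂ c₃ t := by
  obtain ⟨hum, hub, hχc, heq⟩ := hD
  have ht : 0 ≤ t := h0.trans (h12.trans h2t)
  -- interval-integrability of the components on subintervals of [0, t]
  have hγ : ContinuousOn (fun r => (χ r).2.2) (Set.Icc 0 t) := hχc.snd.snd
  have hIIu : ∀ s ∈ Set.Icc (0:ℝ) t, IntervalIntegrable u volume 0 s := by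
    intro s hs
    refine (_root_.intervalIntegrable_const (c := (1:ℝ))).mono_fun'
      hum.aestronglyMeasurable.restrict ?_
    refine (ae_restrict_iff' measurableSet_uIoc).mpr (ae_of_all _ fun r hr => ?_)
    rw [Set.uIoc_of_le hs.1] at hr
    have : r ∈ Set.Icc (0:ℝ) t := ⟨hr.1.le, hr.2.trans hs.2⟩
    have := hub r this
    simpa [Real.norm_eq_abs] using abs_le.mpr this
  have hIIcos : ∀ s ∈ Set.Icc (0:ℝ) t,
      IntervalIntegrable (fun r => Real.cos ((χ r).2.2)) volume 0 s := by
    intro s hs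
    apply ContinuousOn.intervalIntegrable
    apply (Real.continuous_cos.comp_continuousOn hγ).mono
    rw [Set.uIcc_of_le hs.1]
    exact Set.Icc_subset_Icc le_rfl hs.2
  have hIIsin : ∀ s ∈ Set.Icc (0:ℝ) t,
      IntervalIntegrable (fun r => Real.sin ((χ r).2.2)) volume 0 s := by
    intro s hs
    apply ContinuousOn.intervalIntegrable
    apply (Real.continuous_sin.comp_continuousOn hγ).mono
    rw [Set.uIcc_of_le hs.1]
    exact Set.Icc_subset_Icc le_rfl hs.2
  -- the vector integral splits into components
  have hsplit : ∀ s ∈ Set.Icc (0:ℝ) t,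
      χ s = (∫ r in (0:ℝ)..s, Real.cos ((χ r).2.2),
             ∫ r in (0:ℝ)..s, Real.sin ((χ r).2.2),
             ∫ r in (0:ℝ)..s, u r) := by
    intro s hs
    rw [heq s hs]
    unfold dubinsRHS
    rw [intervalIntegral_triple (hIIcos s hs) (hIIsin s hs) (hIIu s hs)]
    simp [Prod.ext_iff]
  -- u agrees a.e. with ctrl on [0, s]
  have hu_ctrl : ∀ s ∈ Set.Icc (0:ℝ) t,
      ∫ r in (0:ℝ)..s, u r = ang t₁ t₂ c₁ c₂ c₃ s := by
    intro s hs
    have : ∫ r in (0:ℝ)..s, u r = ∫ r in (0:ℝ)..s, ctrl t₁ t₂ c₁ c₂ c₃ r := by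
      apply intervalIntegral.integral_congr_ae
      filter_upwards [ae_ne_real t₁, ae_ne_real t₂, ae_ne_real t] with r hr1 hr2 hrt hrm
      rw [Set.uIoc_of_le hs.1] at hrm
      have hr0 : 0 < r := hrm.1
      have hrle : r ≤ t := hrm.2.trans hs.2
      have hrlt : r < t := lt_of_le_of_ne hrle hrt
      unfold ctrl
      rcases lt_trichotomy r t₁ with h | h | h
      · rw [if_pos h]; exact hu1 r ⟨hr0, h⟩
      · exact absurd h hr1
      · rw [if_neg (not_lt.2 h.le)]
        rcases lt_trichotomy r t₂ with h' | h' | h'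
        · rw [if_pos h']; exact hu2 r ⟨h, h'⟩
        · exact absurd h' hr2
        · rw [if_neg (not_lt.2 h'.le)]; exact hu3 r ⟨h', hrlt⟩
    rw [this, integral_ctrl h0 h12 hc1 hc2 hc3 hs.1]
  -- hence the angle of χ is ang
  have hang : ∀ s ∈ Set.Icc (0:ℝ) t, (χ s).2.2 = ang t₁ t₂ c₁ c₂ c₃ s := by
    intro s hs
    rw [hsplit s hs]
    exact hu_ctrl s hs
  -- conclude
  have hEq : Set.EqOn (fun r => Real.cos ((χ r).2.2))
      (fun r => Real.cos (ang t₁ t₂ c₁ c₂ c₃ r)) (Set.uIcc 0 t) := by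
    intro r hr
    rw [Set.uIcc_of_le ht] at hr
    simp only
    rw [hang r hr]
  have hEq' : Set.EqOn (fun r => Real.sin ((χ r).2.2))
      (fun r => Real.sin (ang t₁ t₂ c₁ c₂ c₃ r)) (Set.uIcc 0 t) := by
    intro r hr
    rw [Set.uIcc_of_le ht] at hr
    simp only
    rw [hang r hr]
  have htI : t ∈ Set.Icc (0:ℝ) t := ⟨ht, le_rfl⟩
  rw [hsplit t htI, intervalIntegral.integral_congr hEq, intervalIntegral.integral_congr hEq',
    hu_ctrl t htI]
  rfl

lemma cos_lip (x y : ℝ) : |Real.cos x - Real.cos y| ≤ |x - y| := by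
  rw [Real.cos_sub_cos]
  have h1 : |Real.sin ((x + y) / 2)| ≤ 1 := abs_le.mpr ⟨Real.neg_one_le_sin _, Real.sin_le_one _⟩
  have h2 : |Real.sin ((x - y) / 2)| ≤ |(x - y) / 2| := Real.abs_sin_le_abs
  have h3 : |(x - y) / 2| = |x - y| / 2 := by rw [abs_div]; norm_num
  calc |(-2) * Real.sin ((x + y) / 2) * Real.sin ((x - y) / 2)|
      = 2 * |Real.sin ((x + y) / 2)| * |Real.sin ((x - y) / 2)| := by
        rw [abs_mul, abs_mul]; norm_num
    _ ≤ 2 * 1 * (|x - y| / 2) := by rw [← h3]; gcongr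
    _ = |x - y| := by ring

lemma sin_lip (x y : ℝ) : |Real.sin x - Real.sin y| ≤ |x - y| := by
  rw [Real.sin_sub_sin]
  have h1 : |Real.cos ((x + y) / 2)| ≤ 1 := abs_le.mpr ⟨Real.neg_one_le_cos _, Real.cos_le_one _⟩
  have h2 : |Real.sin ((x - y) / 2)| ≤ |(x - y) / 2| := Real.abs_sin_le_abs
  have h3 : |(x - y) / 2| = |x - y| / 2 := by rw [abs_div]; norm_num
  calc |2 * Real.sin ((x - y) / 2) * Real.cos ((x + y) / 2)|
      = 2 * |Real.sin ((x - y) / 2)| * |Real.cos ((x + y) / 2)| := by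
        rw [abs_mul, abs_mul]; norm_num
    _ ≤ 2 * (|x - y| / 2) * 1 := by rw [← h3]; gcongr
    _ = |x - y| := by ring

lemma ang_diff {t₁ t₂ t₁' t₂' s s' c₁ c₂ c₃ : ℝ}
    (hc1 : |c₁| ≤ 1) (hc2 : |c₂| ≤ 1) (hc3 : |c₃| ≤ 1) :
    |ang t₁ t₂ c₁ c₂ c₃ s - ang t₁' t₂' c₁ c₂ c₃ s'|
      ≤ 2*|t₁ - t₁'| + 2*|t₂ - t₂'| + 5*|s - s'| := by
  set d₁ := min s t₁ - min s' t₁' with hd₁def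
  set d₂ := min s t₂ - min s' t₂' with hd₂def
  have hd₁ : |d₁| ≤ |t₁ - t₁'| + |s - s'| :=
    (abs_min_sub_min_le_max s t₁ s' t₁').trans
      (max_le (le_add_of_nonneg_left (abs_nonneg _)) (le_add_of_nonneg_right (abs_nonneg _)))
  have hd₂ : |d₂| ≤ |t₂ - t₂'| + |s - s'| :=
    (abs_min_sub_min_le_max s t₂ s' t₂').trans
      (max_le (le_add_of_nonneg_left (abs_nonneg _)) (le_add_of_nonneg_right (abs_nonneg _)))
  have e : ang t₁ t₂ c₁ c₂ c₃ s - ang t₁' t₂' c₁ c₂ c₃ s'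
      = c₁ * d₁ + c₂ * (d₂ - d₁) + c₃ * ((s - s') - d₂) := by
    rw [hd₁def, hd₂def]; unfold ang; ring
  rw [e]
  have b1 : |c₁ * d₁| ≤ |d₁| := by
    rw [abs_mul]; exact mul_le_of_le_one_left (abs_nonneg _) hc1
  have b2 : |c₂ * (d₂ - d₁)| ≤ |d₂| + |d₁| := by
    rw [abs_mul]
    exact (mul_le_of_le_one_left (abs_nonneg _) hc2).trans (abs_sub _ _)
  have b3 : |c₃ * ((s - s') - d₂)| ≤ |s - s'| + |d₂| := by
    rw [abs_mul]
    exact (mul_le_of_le_one_left (abs_nonneg _) hc3).trans (abs_sub _ _)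
  have := abs_add_three (c₁ * d₁) (c₂ * (d₂ - d₁)) (c₃ * ((s - s') - d₂))
  linarith

lemma integral_comp_ang_diff {φ : ℝ → ℝ} (hlip : ∀ x y, |φ x - φ y| ≤ |x - y|)
    (hb : ∀ x, |φ x| ≤ 1) (hcφ : Continuous φ)
    {t₁ t₂ t₁' t₂' s s' c₁ c₂ c₃ : ℝ}
    (hc1 : |c₁| ≤ 1) (hc2 : |c₂| ≤ 1) (hc3 : |c₃| ≤ 1) :
    |(∫ r in (0:ℝ)..s, φ (ang t₁ t₂ c₁ c₂ c₃ r)) -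
        ∫ r in (0:ℝ)..s', φ (ang t₁' t₂' c₁ c₂ c₃ r)|
      ≤ |s'| * (2*|t₁ - t₁'| + 2*|t₂ - t₂'|) + |s - s'| := by
  have hf : ∀ a b : ℝ, IntervalIntegrable (fun r => φ (ang t₁ t₂ c₁ c₂ c₃ r)) volume a b :=
    fun a b => (hcφ.comp (ang_continuous _ _ _ _ _)).intervalIntegrable a b
  have hg : ∀ a b : ℝ, IntervalIntegrable (fun r => φ (ang t₁' t₂' c₁ c₂ c₃ r)) volume a b :=
    fun a b => (hcφ.comp (ang_continuous _ _ _ _ _)).intervalIntegrable a b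
  have split := intervalIntegral.integral_add_adjacent_intervals (hf 0 s') (hf s' s)
  have E1 : |(∫ r in (0:ℝ)..s', φ (ang t₁ t₂ c₁ c₂ c₃ r)) -
      ∫ r in (0:ℝ)..s', φ (ang t₁' t₂' c₁ c₂ c₃ r)|
      ≤ (2*|t₁ - t₁'| + 2*|t₂ - t₂'|) * |s' - 0| := by
    rw [← intervalIntegral.integral_sub (hf 0 s') (hg 0 s')]
    have := intervalIntegral.norm_integral_le_of_norm_le_const
      (C := 2*|t₁ - t₁'| + 2*|t₂ - t₂'|)
      (f := fun r => φ (ang t₁ t₂ c₁ c₂ c₃ r) - φ (ang t₁' t₂' c₁ c₂ c₃ r))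
      (a := 0) (b := s') ?_
    · simpa [Real.norm_eq_abs] using this
    · intro x _
      rw [Real.norm_eq_abs]
      have h1 := hlip (ang t₁ t₂ c₁ c₂ c₃ x) (ang t₁' t₂' c₁ c₂ c₃ x)
      have h2 := ang_diff (t₁ := t₁) (t₂ := t₂) (t₁' := t₁') (t₂' := t₂') (s := x) (s' := x)
        hc1 hc2 hc3
      simp only [sub_self, abs_zero] at h2
      linarith
  have E2 : |∫ r in s'..s, φ (ang t₁ t₂ c₁ c₂ c₃ r)| ≤ 1 * |s - s'| := by
    have := intervalIntegral.norm_integral_le_of_norm_le_const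
      (C := 1) (f := fun r => φ (ang t₁ t₂ c₁ c₂ c₃ r)) (a := s') (b := s)
      (fun x _ => by rw [Real.norm_eq_abs]; exact hb _)
    simpa [Real.norm_eq_abs] using this
  calc |(∫ r in (0:ℝ)..s, φ (ang t₁ t₂ c₁ c₂ c₃ r)) -
        ∫ r in (0:ℝ)..s', φ (ang t₁' t₂' c₁ c₂ c₃ r)|
      = |((∫ r in (0:ℝ)..s', φ (ang t₁ t₂ c₁ c₂ c₃ r)) -
          ∫ r in (0:ℝ)..s', φ (ang t₁' t₂' c₁ c₂ c₃ r)) +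
          ∫ r in s'..s, φ (ang t₁ t₂ c₁ c₂ c₃ r)| := by rw [← split]; ring_nf
    _ ≤ |(∫ r in (0:ℝ)..s', φ (ang t₁ t₂ c₁ c₂ c₃ r)) -
          ∫ r in (0:ℝ)..s', φ (ang t₁' t₂' c₁ c₂ c₃ r)| +
          |∫ r in s'..s, φ (ang t₁ t₂ c₁ c₂ c₃ r)| := abs_add_le _ _
    _ ≤ |s'| * (2*|t₁ - t₁'| + 2*|t₂ - t₂'|) + |s - s'| := by
        rw [sub_zero] at E1; nlinarith [E1, E2]

lemma dist_traj_le {t₁ t₂ t₁' t₂' s s' c₁ c₂ c₃ : ℝ}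
    (hc1 : |c₁| ≤ 1) (hc2 : |c₂| ≤ 1) (hc3 : |c₃| ≤ 1) :
    dist (traj t₁ t₂ c₁ c₂ c₃ s) (traj t₁' t₂' c₁ c₂ c₃ s')
      ≤ (2*|s'| + 5) * (|t₁ - t₁'| + |t₂ - t₂'| + |s - s'|) := by
  have hcosb : ∀ x : ℝ, |Real.cos x| ≤ 1 :=
    fun x => abs_le.mpr ⟨Real.neg_one_le_cos x, Real.cos_le_one x⟩
  have hsinb : ∀ x : ℝ, |Real.sin x| ≤ 1 :=
    fun x => abs_le.mpr ⟨Real.neg_one_le_sin x, Real.sin_le_one x⟩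
  have h1 := integral_comp_ang_diff cos_lip hcosb Real.continuous_cos
    (t₁ := t₁) (t₂ := t₂) (t₁' := t₁') (t₂' := t₂') (s := s) (s' := s') hc1 hc2 hc3
  have h2 := integral_comp_ang_diff sin_lip hsinb Real.continuous_sin
    (t₁ := t₁) (t₂ := t₂) (t₁' := t₁') (t₂' := t₂') (s := s) (s' := s') hc1 hc2 hc3
  have h3 := ang_diff (t₁ := t₁) (t₂ := t₂) (t₁' := t₁') (t₂' := t₂') (s := s) (s' := s')
    hc1 hc2 hc3
  have hs'0 : (0:ℝ) ≤ |s'| := abs_nonneg _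
  have ha1 : (0:ℝ) ≤ |t₁ - t₁'| := abs_nonneg _
  have ha2 : (0:ℝ) ≤ |t₂ - t₂'| := abs_nonneg _
  have ha3 : (0:ℝ) ≤ |s - s'| := abs_nonneg _
  rw [Prod.dist_eq, Prod.dist_eq]
  simp only [Real.dist_eq, traj]
  refine max_le ?_ (max_le ?_ ?_) <;> nlinarith

lemma continuous_trajmap {c₁ c₂ c₃ : ℝ} (t : ℝ)
    (hc1 : |c₁| ≤ 1) (hc2 : |c₂| ≤ 1) (hc3 : |c₃| ≤ 1) :
    Continuous (fun p : ℝ × ℝ => traj p.1 p.2 c₁ c₂ c₃ t) := by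
  refine (LipschitzWith.of_dist_le_mul (K := ⟨2*(2*|t| + 5), by positivity⟩) ?_).continuous
  intro p q
  have h := dist_traj_le (t₁ := p.1) (t₂ := p.2) (t₁' := q.1) (t₂' := q.2) (s := t) (s' := t)
    hc1 hc2 hc3
  simp only [sub_self, abs_zero, add_zero] at h
  have h1 : |p.1 - q.1| ≤ dist p q := by
    rw [Prod.dist_eq]; exact le_max_of_le_left (le_of_eq (Real.dist_eq _ _).symm)
  have h2 : |p.2 - q.2| ≤ dist p q := by
    rw [Prod.dist_eq]; exact le_max_of_le_right (le_of_eq (Real.dist_eq _ _).symm)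
  have habs : (0:ℝ) ≤ |t| := abs_nonneg _
  have hd : (0:ℝ) ≤ dist p q := dist_nonneg
  calc dist (traj p.1 p.2 c₁ c₂ c₃ t) (traj q.1 q.2 c₁ c₂ c₃ t)
      ≤ (2*|t| + 5) * (|p.1 - q.1| + |p.2 - q.2|) := h
    _ ≤ (2*(2*|t| + 5)) * dist p q := by nlinarith
    _ = (⟨2*(2*|t| + 5), by positivity⟩ : NNReal) * dist p q := by norm_num

def Cs : Set (ℝ × ℝ × ℝ) :=
  {(-1, 0, -1), (-1, 0, 1), (1, 0, -1), (1, 0, 1), (1, -1, 1), (-1, 1, -1)}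

def Kt (t : ℝ) : Set (ℝ × ℝ) := {p | 0 ≤ p.1 ∧ p.1 ≤ p.2 ∧ p.2 ≤ t}

lemma Cs_finite : Cs.Finite := (Set.finite_singleton _).insert _ |>.insert _ |>.insert _
  |>.insert _ |>.insert _

lemma Cs_abs {c : ℝ × ℝ × ℝ} (hc : c ∈ Cs) : |c.1| ≤ 1 ∧ |c.2.1| ≤ 1 ∧ |c.2.2| ≤ 1 := by
  simp only [Cs, Set.mem_insert_iff, Set.mem_singleton_iff] at hc
  rcases hc with rfl | rfl | rfl | rfl | rfl | rfl <;> norm_num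

lemma abs_le_one_of_mem {c : ℝ} (hc : c ∈ ({-1, 1} : Set ℝ)) : |c| ≤ 1 := by
  rcases hc with rfl | hc
  · norm_num
  · rw [Set.mem_singleton_iff] at hc; rw [hc]; norm_num

lemma ctrl_eq_left {t₁ t₂ c₁ c₂ c₃ r : ℝ} (h : r < t₁) : ctrl t₁ t₂ c₁ c₂ c₃ r = c₁ := if_pos h

lemma ctrl_eq_mid {t₁ t₂ c₁ c₂ c₃ r : ℝ} (h1 : t₁ ≤ r) (h2 : r < t₂) :
    ctrl t₁ t₂ c₁ c₂ c₃ r = c₂ := by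
  unfold ctrl; rw [if_neg (not_lt.2 h1), if_pos h2]

lemma ctrl_eq_right {t₁ t₂ c₁ c₂ c₃ r : ℝ} (h12 : t₁ ≤ t₂) (h : t₂ ≤ r) :
    ctrl t₁ t₂ c₁ c₂ c₃ r = c₃ := by
  unfold ctrl; rw [if_neg (not_lt.2 (h12.trans h)), if_neg (not_lt.2 h)]

lemma ctrl_CSC {t t₁ t₂ c d : ℝ} (hc : c ∈ ({-1, 1} : Set ℝ)) (hd : d ∈ ({-1, 1} : Set ℝ))
    (h01 : 0 ≤ t₁) (h12 : t₁ ≤ t₂) (h2t : t₂ ≤ t) :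
    IsCSCControl 0 t (ctrl t₁ t₂ c 0 d) :=
  ⟨t₁, t₂, h01, h12, h2t, c, hc, d, hd,
    fun _ hr => ctrl_eq_left hr.2, fun _ hr => ctrl_eq_mid hr.1.le hr.2,
    fun _ hr => ctrl_eq_right h12 hr.1.le⟩

lemma ctrl_CCC {t t₁ t₂ c : ℝ} (hc : c ∈ ({-1, 1} : Set ℝ))
    (h01 : 0 ≤ t₁) (h12 : t₁ ≤ t₂) (h2t : t₂ ≤ t) :
    IsCCCControl 0 t (ctrl t₁ t₂ c (-c) c) :=
  ⟨t₁, t₂, h01, h12, h2t, c, hc,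
    fun _ hr => ctrl_eq_left hr.2, fun _ hr => ctrl_eq_mid hr.1.le hr.2,
    fun _ hr => ctrl_eq_right h12 hr.1.le⟩

lemma Cs_control {c : ℝ × ℝ × ℝ} (hc : c ∈ Cs) {t t₁ t₂ : ℝ}
    (h01 : 0 ≤ t₁) (h12 : t₁ ≤ t₂) (h2t : t₂ ≤ t) :
    IsCSCControl 0 t (ctrl t₁ t₂ c.1 c.2.1 c.2.2) ∨
      IsCCCControl 0 t (ctrl t₁ t₂ c.1 c.2.1 c.2.2) := by
  simp only [Cs, Set.mem_insert_iff, Set.mem_singleton_iff] at hc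
  rcases hc with rfl | rfl | rfl | rfl | rfl | rfl
  · exact Or.inl (ctrl_CSC (by norm_num) (by norm_num) h01 h12 h2t)
  · exact Or.inl (ctrl_CSC (by norm_num) (by norm_num) h01 h12 h2t)
  · exact Or.inl (ctrl_CSC (by norm_num) (by norm_num) h01 h12 h2t)
  · exact Or.inl (ctrl_CSC (by norm_num) (by norm_num) h01 h12 h2t)
  · exact Or.inr (by
      have := ctrl_CCC (t := t) (t₁ := t₁) (t₂ := t₂) (c := (1:ℝ)) (by norm_num) h01 h12 h2t
      norm_num at this ⊢
      exact this)
  · exact Or.inr (by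
      have := ctrl_CCC (t := t) (t₁ := t₁) (t₂ := t₂) (c := (-1:ℝ)) (by norm_num) h01 h12 h2t
      norm_num at this ⊢
      exact this)

lemma dubinsA_eq {t : ℝ} (ht : 0 ≤ t) :
    DubinsA t = ⋃ c ∈ Cs, (fun p : ℝ × ℝ => traj p.1 p.2 c.1 c.2.1 c.2.2 t) '' Kt t := by
  ext y
  constructor
  · rintro ⟨χ, u, hD, hctl | hctl, rfl⟩
    · obtain ⟨t₁, t₂, h01, h12, h2t, c, hc, d, hd, hu1, hu2, hu3⟩ := hctl
      have hc1 := abs_le_one_of_mem hc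
      have hd1 := abs_le_one_of_mem hd
      have hend := endpoint_eq h01 h12 h2t hc1 (by norm_num) hd1 hD hu1 hu2 hu3
      refine Set.mem_biUnion (show ((c, 0, d) : ℝ × ℝ × ℝ) ∈ Cs from ?_) ?_
      · rcases hc with rfl | hc <;> rcases hd with rfl | hd <;>
          simp_all [Cs, Set.mem_singleton_iff]
      · exact ⟨(t₁, t₂), ⟨h01, h12, h2t⟩, hend.symm⟩
    · obtain ⟨t₁, t₂, h01, h12, h2t, c, hc, hu1, hu2, hu3⟩ := hctl
      have hc1 := abs_le_one_of_mem hc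
      have hend := endpoint_eq h01 h12 h2t hc1 (by rwa [abs_neg]) hc1 hD hu1 hu2 hu3
      refine Set.mem_biUnion (show ((c, -c, c) : ℝ × ℝ × ℝ) ∈ Cs from ?_) ?_
      · rcases hc with rfl | hc <;> simp_all [Cs, Set.mem_singleton_iff]
      · exact ⟨(t₁, t₂), ⟨h01, h12, h2t⟩, hend.symm⟩
  · intro hy
    obtain ⟨c, hc, p, hp, rfl⟩ := by
      simpa only [Set.mem_iUnion, Set.mem_image, exists_prop] using hy
    obtain ⟨hc1, hc2, hc3⟩ := Cs_abs hc
    exact ⟨traj p.1 p.2 c.1 c.2.1 c.2.2, ctrl p.1 p.2 c.1 c.2.1 c.2.2,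
      traj_isDubins hp.1 hp.2.1 hp.2.2 hc1 hc2 hc3,
      Cs_control hc hp.1 hp.2.1 hp.2.2, rfl⟩

lemma isCompact_Kt (t : ℝ) : IsCompact (Kt t) := by
  have h : Kt t = (Set.Icc (0:ℝ) t ×ˢ Set.Icc (0:ℝ) t) ∩ {p : ℝ × ℝ | p.1 ≤ p.2} := by
    ext p
    constructor
    · rintro ⟨h1, h2, h3⟩
      exact ⟨⟨⟨h1, h2.trans h3⟩, ⟨h1.trans h2, h3⟩⟩, h2⟩
    · rintro ⟨⟨⟨ha, _⟩, ⟨_, hb⟩⟩, h⟩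
      exact ⟨ha, h, hb⟩
  rw [h]
  exact (isCompact_Icc.prod isCompact_Icc).inter_right
    (isClosed_le continuous_fst continuous_snd)

lemma clamp_abs {a s t : ℝ} (has : a ≤ s) : |a - min a t| ≤ |s - t| := by
  rcases le_total a t with h | h
  · rw [min_eq_left h, sub_self, abs_zero]; exact abs_nonneg _
  · rw [min_eq_right h, abs_of_nonneg (by linarith)]
    calc a - t ≤ s - t := by linarith
      _ ≤ |s - t| := le_abs_self _

/-- `A(t)` is nonempty and compact for every `t ≥ 0`, and for each
`T > 0` the map `t ↦ A(t)` is continuous on `[0,T]` with respect to the Hausdorff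
distance. -/
theorem dubinsA_nonempty_compact_continuous :
    (∀ t : ℝ, 0 ≤ t → (DubinsA t).Nonempty ∧ IsCompact (DubinsA t)) ∧
    (∀ T : ℝ, 0 < T → ∀ t ∈ Set.Icc 0 T, ∀ ε > 0, ∃ δ > 0, ∀ s ∈ Set.Icc 0 T,
      |s - t| < δ → hausdorffDist (DubinsA s) (DubinsA t) < ε) := by
  constructor
  · intro t ht
    constructor
    · refine ⟨traj 0 0 1 0 1 t, traj 0 0 1 0 1, ctrl 0 0 1 0 1,
        traj_isDubins le_rfl le_rfl ht (by norm_num) (by norm_num) (by norm_num),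
        Or.inl (ctrl_CSC (by norm_num) (by norm_num) le_rfl le_rfl ht), rfl⟩
    · rw [dubinsA_eq ht]
      refine Cs_finite.isCompact_biUnion fun c hc => ?_
      obtain ⟨hc1, hc2, hc3⟩ := Cs_abs hc
      exact (isCompact_Kt t).image (continuous_trajmap t hc1 hc2 hc3)
  · intro T hT t htmem ε hε
    refine ⟨ε / (6*T + 16), by positivity, fun s hsmem hst => ?_⟩
    have h0s := hsmem.1
    have h0t := htmem.1
    have hsT := hsmem.2
    have htT := htmem.2
    have habsT : |t| ≤ T := by rw [abs_of_nonneg h0t]; exact htT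
    have habsS : |s| ≤ T := by rw [abs_of_nonneg h0s]; exact hsT
    have habsst : (0:ℝ) ≤ |s - t| := abs_nonneg _
    set r : ℝ := (6*T + 15) * |s - t| with hrdef
    have hr0 : 0 ≤ r := mul_nonneg (by linarith) habsst
    have key : ∀ (a b : ℝ), 0 ≤ a → a ≤ T → 0 ≤ b → b ≤ T →
        ∀ x ∈ ⋃ c ∈ Cs, (fun p : ℝ × ℝ => traj p.1 p.2 c.1 c.2.1 c.2.2 a) '' Kt a,
        ∃ y ∈ ⋃ c ∈ Cs, (fun p : ℝ × ℝ => traj p.1 p.2 c.1 c.2.1 c.2.2 b) '' Kt b,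
          dist x y ≤ (6*T + 15) * |a - b| := by
      intro a b h0a haT h0b hbT x hx
      obtain ⟨c, hc, p, hp, rfl⟩ := by
        simpa only [Set.mem_iUnion, Set.mem_image, exists_prop] using hx
      obtain ⟨hc1, hc2, hc3⟩ := Cs_abs hc
      refine ⟨traj (min p.1 b) (min p.2 b) c.1 c.2.1 c.2.2 b, ?_, ?_⟩
      · simp only [Set.mem_iUnion, Set.mem_image, exists_prop]
        exact ⟨c, hc, (min p.1 b, min p.2 b),
          ⟨le_min hp.1 h0b, min_le_min hp.2.1 le_rfl, min_le_right _ _⟩, rfl⟩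
      · have hd := dist_traj_le (t₁ := p.1) (t₂ := p.2) (t₁' := min p.1 b)
          (t₂' := min p.2 b) (s := a) (s' := b) hc1 hc2 hc3
        have e1 : |p.1 - min p.1 b| ≤ |a - b| := clamp_abs (hp.2.1.trans hp.2.2)
        have e2 : |p.2 - min p.2 b| ≤ |a - b| := clamp_abs hp.2.2
        have habsb : |b| ≤ T := by rw [abs_of_nonneg h0b]; exact hbT
        have hb0 : (0:ℝ) ≤ |b| := abs_nonneg _
        have hab0 : (0:ℝ) ≤ |a - b| := abs_nonneg _
        calc dist (traj p.1 p.2 c.1 c.2.1 c.2.2 a)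
              (traj (min p.1 b) (min p.2 b) c.1 c.2.1 c.2.2 b)
            ≤ (2*|b| + 5) * (|p.1 - min p.1 b| + |p.2 - min p.2 b| + |a - b|) := hd
          _ ≤ (6*T + 15) * |a - b| := by nlinarith
    have hH : hausdorffDist (DubinsA s) (DubinsA t) ≤ r := by
      rw [dubinsA_eq h0s, dubinsA_eq h0t]
      apply hausdorffDist_le_of_mem_dist hr0
      · exact key s t h0s hsT h0t htT
      · intro y hy
        obtain ⟨x, hx, hxy⟩ := key t s h0t htT h0s hsT y hy
        refine ⟨x, hx, ?_⟩
        rw [hrdef, abs_sub_comm s t]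
        exact hxy
      
    refine hH.trans_lt ?_
    rw [hrdef]
    rw [lt_div_iff₀ (by positivity : (0:ℝ) < 6*T + 16)] at hst
    nlinarith
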